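/- Consider N = 2, P(x) the constant matrix diag(−3, 0) on [0,π], and Dirichlet boundary conditions. Then every eigenvalue λ ≠ 1 of this problem is simple: for every real λ ≠ 1, the real vector space of C² functions φ : [0,π] → ℝ² with −φ'' + P·φ = λ·φ, φ(0) = 0 and φ(π) = 0 has dimension at most 1. -/

import Mathlib

open Matrix MeasureTheory Set Filter

attribute [local instance] Matrix.normedAddCommGroup Matrix.normedSpace

/-- Uniqueness: a C² solution of `u'' = c u` on `[0,π]` with zero initial data vanishes. -/
lemma uniq_zero (c : ℝ) (u : ℝ → ℝ) (hu : ContDiff ℝ 2 u)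
    (hode : ∀ x ∈ Set.Icc (0:ℝ) Real.pi, deriv (deriv u) x = c * u x)
    (h0 : u 0 = 0) (h0' : deriv u 0 = 0) :
    ∀ x ∈ Set.Icc (0:ℝ) Real.pi, u x = 0 := by
  have hud : Differentiable ℝ u := hu.differentiable (by norm_num)
  have hu1 : ContDiff ℝ 1 (deriv u) := by
    have := (contDiff_succ_iff_deriv (n := 1)).1 (by exact_mod_cast hu)
    exact this.2.2
  have hud' : Differentiable ℝ (deriv u) := hu1.differentiable one_ne_zero
  set L : (ℝ × ℝ) →L[ℝ] (ℝ × ℝ) :=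
    (ContinuousLinearMap.snd ℝ ℝ ℝ).prod (c • ContinuousLinearMap.fst ℝ ℝ ℝ) with hL
  have key : EqOn (fun t => (u t, deriv u t)) (fun _ => ((0:ℝ), (0:ℝ)))
      (Icc (0:ℝ) Real.pi) := by
    apply ODE_solution_unique (v := fun _ p => L p) (K := ‖L‖₊)
    · intro t; exact L.lipschitz
    · exact ((hud.continuous.prodMk hud'.continuous)).continuousOn
    · intro t ht
      have h1 : HasDerivAt u (deriv u t) t := (hud t).hasDerivAt
      have h2 : HasDerivAt (deriv u) (deriv (deriv u) t) t := (hud' t).hasDerivAt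
      have h3 : HasDerivAt (fun t => (u t, deriv u t)) (deriv u t, deriv (deriv u) t) t :=
        h1.prodMk h2
      have : deriv (deriv u) t = c * u t := hode t ⟨ht.1, le_of_lt ht.2⟩
      rw [this] at h3
      exact h3.hasDerivWithinAt
    · exact continuousOn_const
    · intro t ht
      have : L ((0:ℝ), (0:ℝ)) = ((0:ℝ), (0:ℝ)) := by simp [hL]
      rw [this]
      exact (hasDerivAt_const t _).hasDerivWithinAt
    · simp [h0, h0']
  intro x hx
  exact congrArg Prod.fst (key hx)

/-- Fundamental solution of `u'' = c u` with `u(0)=0`, `u'(0)=1`, and the spectral fact. -/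
lemma exists_fsol (c : ℝ) :
    ∃ s : ℝ → ℝ, ContDiff ℝ 2 s ∧ (∀ x, deriv (deriv s) x = c * s x) ∧
      s 0 = 0 ∧ deriv s 0 = 1 ∧ (s Real.pi = 0 → ∃ n : ℤ, (n:ℝ)^2 = -c) := by
  rcases lt_trichotomy c 0 with hc | hc | hc
  · -- c < 0
    set r := Real.sqrt (-c) with hr
    have hrpos : 0 < r := Real.sqrt_pos.2 (by linarith)
    have hr2 : r ^ 2 = -c := Real.sq_sqrt (by linarith)
    have hlin : ∀ x : ℝ, HasDerivAt (fun x : ℝ => r * x) r x := by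
      intro x; simpa using (hasDerivAt_id x).const_mul r
    have hd1 : ∀ x, HasDerivAt (fun x => Real.sin (r * x) / r) (Real.cos (r * x)) x := by
      intro x
      have := ((Real.hasDerivAt_sin (r * x)).comp x (hlin x)).div_const r
      refine this.congr_deriv ?_; field_simp
    have hD1 : deriv (fun x => Real.sin (r * x) / r) = fun x => Real.cos (r * x) :=
      funext fun x => (hd1 x).deriv
    have hd2 : ∀ x, HasDerivAt (fun x => Real.cos (r * x)) (c * (Real.sin (r * x) / r)) x := by
      intro x
      have := (Real.hasDerivAt_cos (r * x)).comp x (hlin x)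
      refine this.congr_deriv ?_
      have hc' : c = -(r^2) := by linarith
      rw [hc']; field_simp
    refine ⟨fun x => Real.sin (r * x) / r,
      (Real.contDiff_sin.comp (contDiff_const.mul contDiff_id)).div_const r,
      ?_, by simp, by rw [hD1]; norm_num, ?_⟩
    · intro x; rw [hD1]; exact (hd2 x).deriv
    · intro hπ
      have hsin : Real.sin (r * Real.pi) = 0 := by
        rcases div_eq_zero_iff.mp hπ with h | h
        · exact h
        · exact absurd h (ne_of_gt hrpos)
      rw [Real.sin_eq_zero_iff] at hsin
      obtain ⟨n, hn⟩ := hsin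
      refine ⟨n, ?_⟩
      have hπ0 : (Real.pi : ℝ) ≠ 0 := ne_of_gt Real.pi_pos
      have hnr : (n : ℝ) = r := mul_right_cancel₀ hπ0 hn
      rw [hnr]; exact hr2
  · -- c = 0
    refine ⟨fun x => x, contDiff_id, ?_, rfl, by simp, ?_⟩
    · intro x
      have : deriv (fun x : ℝ => x) = fun _ => (1:ℝ) := by
        funext y; simp
      rw [this]; simp [hc]
    · intro h; exact absurd h (ne_of_gt Real.pi_pos)
  · -- c > 0
    set r := Real.sqrt c with hr
    have hrpos : 0 < r := Real.sqrt_pos.2 hc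
    have hr2 : r ^ 2 = c := Real.sq_sqrt hc.le
    have hlin : ∀ x : ℝ, HasDerivAt (fun x : ℝ => r * x) r x := by
      intro x; simpa using (hasDerivAt_id x).const_mul r
    have hd1 : ∀ x, HasDerivAt (fun x => Real.sinh (r * x) / r) (Real.cosh (r * x)) x := by
      intro x
      have := ((Real.hasDerivAt_sinh (r * x)).comp x (hlin x)).div_const r
      refine this.congr_deriv ?_; field_simp
    have hD1 : deriv (fun x => Real.sinh (r * x) / r) = fun x => Real.cosh (r * x) :=
      funext fun x => (hd1 x).deriv
    have hd2 : ∀ x, HasDerivAt (fun x => Real.cosh (r * x)) (c * (Real.sinh (r * x) / r)) x := by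
      intro x
      have := (Real.hasDerivAt_cosh (r * x)).comp x (hlin x)
      refine this.congr_deriv ?_
      rw [← hr2]; field_simp
    refine ⟨fun x => Real.sinh (r * x) / r,
      (Real.contDiff_sinh.comp (contDiff_const.mul contDiff_id)).div_const r,
      ?_, by simp, by rw [hD1]; norm_num, ?_⟩
    · intro x; rw [hD1]; exact (hd2 x).deriv
    · intro hπ
      exfalso
      have hs : Real.sinh (r * Real.pi) = 0 := by
        rcases div_eq_zero_iff.mp hπ with h | h
        · exact h
        · exact absurd h (ne_of_gt hrpos)
      rw [Real.sinh_eq_zero] at hs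
      nlinarith [Real.pi_pos]

lemma diff_of_deriv {u : ℝ → ℝ} (hu : ContDiff ℝ 2 u) : Differentiable ℝ (deriv u) := by
  have := (contDiff_succ_iff_deriv (n := 1)).1 (by exact_mod_cast hu)
  exact this.2.2.differentiable one_ne_zero

lemma deriv_comb (a b : ℝ) {u v : ℝ → ℝ} (hu : Differentiable ℝ u) (hv : Differentiable ℝ v) :
    deriv (fun x => a * u x + b * v x) = fun x => a * deriv u x + b * deriv v x :=
  funext fun x => (((hu x).hasDerivAt.const_mul a).add ((hv x).hasDerivAt.const_mul b)).deriv

/-- A linear combination of solutions with zero value and derivative at 0 vanishes on `[0,π]`. -/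
lemma comb_zero (c a b : ℝ) {u v : ℝ → ℝ} (hu : ContDiff ℝ 2 u) (hv : ContDiff ℝ 2 v)
    (hou : ∀ x ∈ Set.Icc (0:ℝ) Real.pi, deriv (deriv u) x = c * u x)
    (hov : ∀ x ∈ Set.Icc (0:ℝ) Real.pi, deriv (deriv v) x = c * v x)
    (hu0 : u 0 = 0) (hv0 : v 0 = 0)
    (hd : a * deriv u 0 + b * deriv v 0 = 0) :
    ∀ x ∈ Set.Icc (0:ℝ) Real.pi, a * u x + b * v x = 0 := by
  have hud : Differentiable ℝ u := hu.differentiable (by norm_num)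
  have hvd : Differentiable ℝ v := hv.differentiable (by norm_num)
  have h1 : deriv (fun x => a * u x + b * v x) = fun x => a * deriv u x + b * deriv v x :=
    deriv_comb a b hud hvd
  apply uniq_zero c _ ((contDiff_const.mul hu).add (contDiff_const.mul hv))
  · intro x hx
    rw [h1, deriv_comb a b (diff_of_deriv hu) (diff_of_deriv hv)]
    simp only [hou x hx, hov x hx]; ring
  · simp [hu0, hv0]
  · rw [h1]; exact hd

/-- If `-c` is not an integer square, a Dirichlet solution of `u''=cu` has zero derivative at 0. -/
lemma good_deriv_zero (c : ℝ) (hc : ¬ ∃ n : ℤ, (n:ℝ)^2 = -c) {u : ℝ → ℝ}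
    (hu : ContDiff ℝ 2 u)
    (hode : ∀ x ∈ Set.Icc (0:ℝ) Real.pi, deriv (deriv u) x = c * u x)
    (h0 : u 0 = 0) (hπ : u Real.pi = 0) : deriv u 0 = 0 := by
  obtain ⟨s, hs, hsode, hs0, hs1, hsπ⟩ := exists_fsol c
  have hsπ' : s Real.pi ≠ 0 := fun h => hc (hsπ h)
  have := comb_zero c 1 (-(deriv u 0)) hu hs hode (fun x _ => hsode x) h0 hs0
    (by rw [hs1]; ring)
  have h2 := this Real.pi ⟨Real.pi_pos.le, le_refl _⟩
  rw [hπ] at h2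
  have : deriv u 0 * s Real.pi = 0 := by linarith
  rcases mul_eq_zero.mp this with h | h
  · exact h
  · exact absurd h hsπ'

lemma sq_diff_three (m n : ℤ) (h : m ^ 2 = n ^ 2 + 3) : n ^ 2 = 1 := by
  have hM : |m| ^ 2 = |n| ^ 2 + 3 := by rw [sq_abs, sq_abs]; exact h
  have hM0 : 0 ≤ |m| := abs_nonneg m
  have hN0 : 0 ≤ |n| := abs_nonneg n
  have hgt : |n| < |m| := by nlinarith
  have hge : |n| + 1 ≤ |m| := Int.add_one_le_iff.mpr hgt
  have hsq : (|n| + 1) ^ 2 ≤ |m| ^ 2 := by nlinarith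
  have hN1 : |n| ≤ 1 := by nlinarith
  have hM2 : |m| ≤ 2 := by nlinarith
  have : |n| ^ 2 = 1 := by
    interval_cases h1 : |m| <;> interval_cases h2 : |n| <;> omega
  rwa [sq_abs] at this

/-- `φ` is a C² solution of the Dirichlet problem `-φ'' + P·φ = l·φ`, `φ(0) = φ(π) = 0`
for the constant potential `P = diag(-3, 0)`. -/
def DirichletSol (l : ℝ) (φ : ℝ → Fin 2 → ℝ) : Prop :=
  ContDiff ℝ 2 φ ∧
    (∀ x ∈ Set.Icc (0:ℝ) Real.pi,
      -(deriv (deriv φ) x) + !![(-3:ℝ), 0; 0, 0] *ᵥ φ x = l • φ x) ∧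
    φ 0 = 0 ∧ φ Real.pi = 0

lemma comp_sol (l : ℝ) (χ : ℝ → Fin 2 → ℝ) (h : DirichletSol l χ) (i : Fin 2) :
    ContDiff ℝ 2 (fun x => χ x i) ∧
    (∀ x ∈ Set.Icc (0:ℝ) Real.pi,
      deriv (deriv (fun x => χ x i)) x = (![-3-l, -l] i) * χ x i) ∧
    χ 0 i = 0 ∧ χ Real.pi i = 0 := by
  obtain ⟨hs, hode, h0, hπ⟩ := h
  have hχd : Differentiable ℝ χ := hs.differentiable (by norm_num)
  have hχ1 : ContDiff ℝ 1 (deriv χ) := by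
    have := (contDiff_succ_iff_deriv (n := 1)).1 (by exact_mod_cast hs)
    exact this.2.2
  have hχd' : Differentiable ℝ (deriv χ) := hχ1.differentiable one_ne_zero
  set L : (Fin 2 → ℝ) →L[ℝ] ℝ := ContinuousLinearMap.proj i with hLdef
  have hcomp : ContDiff ℝ 2 (fun x => χ x i) := L.contDiff.comp hs
  have hd1 : deriv (fun x => χ x i) = fun x => deriv χ x i := by
    funext x
    exact (L.hasFDerivAt.comp_hasDerivAt x (hχd x).hasDerivAt).deriv
  have hd2 : ∀ x, deriv (deriv (fun x => χ x i)) x = deriv (deriv χ) x i := by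
    intro x
    rw [hd1]
    exact (L.hasFDerivAt.comp_hasDerivAt x (hχd' x).hasDerivAt).deriv
  refine ⟨hcomp, ?_, by rw [h0]; rfl, by rw [hπ]; rfl⟩
  intro x hx
  have e := congrFun (hode x hx) i
  rw [hd2 x]
  fin_cases i <;>
    simp [Matrix.mulVec, dotProduct, Fin.sum_univ_two,
      Matrix.cons_val_zero, Matrix.cons_val_one, Matrix.head_cons] at e ⊢ <;>
    linarith

/-- For `P = diag(-3,0)` with Dirichlet boundary conditions, every
eigenvalue `λ ≠ 1` is simple: the corresponding solution space (of functions on `[0,π]`)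
has dimension at most `1`. -/
theorem dirichlet_example_simple_away_from_one
    (l : ℝ) (hl : l ≠ 1)
    (φ ψ : ℝ → Fin 2 → ℝ) (hφ : DirichletSol l φ) (hψ : DirichletSol l ψ) :
    ∃ a b : ℝ, ¬(a = 0 ∧ b = 0) ∧
      ∀ x ∈ Set.Icc (0:ℝ) Real.pi, a • φ x + b • ψ x = 0 := by
  -- one of the two components has no nonzero Dirichlet solution
  have hkey : ∃ i : Fin 2, ¬ ∃ n : ℤ, (n:ℝ)^2 = -(![(-3:ℝ)-l, -l] i) := by
    by_contra h
    push_neg at h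
    obtain ⟨m, hm⟩ := h 0
    obtain ⟨n, hn⟩ := h 1
    simp only [Matrix.cons_val_zero, Matrix.cons_val_one, Matrix.head_cons] at hm hn
    have hm' : (m:ℝ)^2 = l + 3 := by rw [hm]; ring
    have hn' : (n:ℝ)^2 = l := by rw [hn]; ring
    have hmn : (m:ℝ)^2 = (n:ℝ)^2 + 3 := by rw [hm', hn']
    have hmnZ : m ^ 2 = n ^ 2 + 3 := by exact_mod_cast hmn
    have := sq_diff_three m n hmnZ
    apply hl
    rw [← hn']
    exact_mod_cast this
  obtain ⟨i, hgood⟩ := hkey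
  set j : Fin 2 := i + 1 with hj
  have hcases : ∀ k : Fin 2, k = i ∨ k = j := by
    intro k; fin_cases i <;> fin_cases k <;> simp [hj]
  -- unpack per-index facts
  have Fφ := fun k => comp_sol l φ hφ k
  have Fψ := fun k => comp_sol l ψ hψ k
  -- good component has zero derivative at 0
  have hφi : deriv (fun x => φ x i) 0 = 0 :=
    good_deriv_zero _ hgood (Fφ i).1 (Fφ i).2.1 (Fφ i).2.2.1 (Fφ i).2.2.2
  have hψi : deriv (fun x => ψ x i) 0 = 0 :=
    good_deriv_zero _ hgood (Fψ i).1 (Fψ i).2.1 (Fψ i).2.2.1 (Fψ i).2.2.2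
  set p := deriv (fun x => φ x j) 0 with hp
  set q := deriv (fun x => ψ x j) 0 with hq
  -- choose coefficients
  by_cases hpq : p = 0 ∧ q = 0
  · refine ⟨1, 0, by simp, ?_⟩
    intro x hx
    funext k
    have hk : 1 * deriv (fun x => φ x k) 0 + 0 * deriv (fun x => ψ x k) 0 = 0 := by
      rcases hcases k with h | h <;> subst h <;> simp [hφi, hpq.1, ← hp]
    have := comb_zero (![(-3:ℝ)-l, -l] k) 1 0 (Fφ k).1 (Fψ k).1 (Fφ k).2.1 (Fψ k).2.1
      (Fφ k).2.2.1 (Fψ k).2.2.1 hk x hx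
    simpa using this
  · refine ⟨q, -p, ?_, ?_⟩
    · rintro ⟨h1, h2⟩
      exact hpq ⟨by linarith [neg_eq_zero.mp h2], h1⟩
    intro x hx
    funext k
    have hk : q * deriv (fun x => φ x k) 0 + (-p) * deriv (fun x => ψ x k) 0 = 0 := by
      rcases hcases k with h | h <;> subst h
      · rw [hφi, hψi]; ring
      · rw [← hp, ← hq]; ring
    have := comb_zero (![(-3:ℝ)-l, -l] k) q (-p) (Fφ k).1 (Fψ k).1 (Fφ k).2.1 (Fψ k).2.1
      (Fφ k).2.2.1 (Fψ k).2.2.1 hk x hx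
    simpa using this
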